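/- Fix a cap c ≥ 0 and define levelC(i) = min(c, padicValNat 2 i) for positive integers i. Then for every n ≥ 1, the sum over i from 1 to n of 2^(levelC(i)) is at most n · (c + 2). -/

import Mathlib

lemma sumpow2 (m : ℕ) : ∑ j ∈ Finset.range m, 2 ^ j = 2 ^ m - 1 := by
  induction m with
  | zero => simp
  | succ k ih =>
    rw [Finset.sum_range_succ, ih, pow_succ]
    have h : 1 ≤ 2 ^ k := Nat.one_le_two_pow
    omega

lemma key (c v : ℕ) :
    2 ^ min c v = 1 + ∑ j ∈ Finset.range c, if j + 1 ≤ v then 2 ^ j else 0 := by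
  rcases le_or_gt c v with h | h
  · rw [min_eq_left h]
    have : ∀ j ∈ Finset.range c, (if j + 1 ≤ v then 2 ^ j else 0) = 2 ^ j := by
      intro j hj
      rw [Finset.mem_range] at hj
      rw [if_pos (by omega)]
    rw [Finset.sum_congr rfl this, sumpow2]
    have h1 : 1 ≤ 2 ^ c := Nat.one_le_two_pow
    omega
  · rw [min_eq_right h.le]
    have hsub : Finset.range v ⊆ Finset.range c := Finset.range_subset_range.mpr h.le
    have : ∑ j ∈ Finset.range c, (if j + 1 ≤ v then 2 ^ j else 0)
        = ∑ j ∈ Finset.range v, (if j + 1 ≤ v then 2 ^ j else 0) := by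
      refine (Finset.sum_subset hsub ?_).symm
      intro j _ hj
      rw [Finset.mem_range] at hj
      rw [if_neg (by omega)]
    rw [this]
    have : ∀ j ∈ Finset.range v, (if j + 1 ≤ v then 2 ^ j else 0) = 2 ^ j := by
      intro j hj
      rw [Finset.mem_range] at hj
      rw [if_pos (by omega)]
    rw [Finset.sum_congr rfl this, sumpow2]
    have h1 : 1 ≤ 2 ^ v := Nat.one_le_two_pow
    omega

theorem stmt7 (c n : ℕ) (hn : 1 ≤ n) :
    ∑ i ∈ Finset.Icc 1 n, 2 ^ min c (padicValNat 2 i) ≤ n * (c + 2) := by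
  have hIcc : Finset.Icc 1 n = Finset.Ioc 0 n := rfl
  have hstep : ∑ i ∈ Finset.Icc 1 n, 2 ^ min c (padicValNat 2 i)
      = n + ∑ j ∈ Finset.range c,
          ∑ i ∈ Finset.Icc 1 n, (if j + 1 ≤ padicValNat 2 i then 2 ^ j else 0) := by
    rw [Finset.sum_congr rfl (fun i _ => key c (padicValNat 2 i)), Finset.sum_add_distrib,
      Finset.sum_const, Nat.card_Icc, smul_eq_mul, mul_one,
      Finset.sum_comm]
    congr 1
  rw [hstep]
  have hbound : ∀ j ∈ Finset.range c,
      ∑ i ∈ Finset.Icc 1 n, (if j + 1 ≤ padicValNat 2 i then 2 ^ j else 0) ≤ n := by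
    intro j _
    have hfil : ∑ i ∈ Finset.Icc 1 n, (if j + 1 ≤ padicValNat 2 i then 2 ^ j else 0)
        = ((Finset.Icc 1 n).filter (fun i => j + 1 ≤ padicValNat 2 i)).card * 2 ^ j := by
      rw [← Finset.sum_filter, Finset.sum_const, smul_eq_mul]
    rw [hfil]
    have hcond : (Finset.Icc 1 n).filter (fun i => j + 1 ≤ padicValNat 2 i)
        = (Finset.Ioc 0 n).filter (fun i => 2 ^ (j + 1) ∣ i) := by
      rw [hIcc]
      apply Finset.filter_congr
      intro i hi
      rw [Finset.mem_Ioc] at hi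
      haveI : Fact (Nat.Prime 2) := ⟨Nat.prime_two⟩
      simp [padicValNat_dvd_iff_le (p := 2) (by omega : i ≠ 0)]
    rw [hcond, Nat.Ioc_filter_dvd_card_eq_div]
    calc n / 2 ^ (j + 1) * 2 ^ j ≤ n / 2 ^ (j + 1) * 2 ^ (j + 1) :=
          Nat.mul_le_mul_left _ (Nat.pow_le_pow_right (by norm_num) (by omega))
      _ ≤ n := Nat.div_mul_le_self _ _
  calc n + ∑ j ∈ Finset.range c,
        ∑ i ∈ Finset.Icc 1 n, (if j + 1 ≤ padicValNat 2 i then 2 ^ j else 0)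
      ≤ n + ∑ _j ∈ Finset.range c, n := by
        exact Nat.add_le_add_left (Finset.sum_le_sum hbound) n
    _ = n + c * n := by rw [Finset.sum_const, Finset.card_range, smul_eq_mul]
    _ ≤ n * (c + 2) := by nlinarith
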